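/- For every k ≥ 4, the ladder graph P_k □ P_2 (the Cartesian product of the path on k vertices with the path on 2 vertices) satisfies γ̄_p(P_k □ P_2) = ⌈(k − 4)/3⌉. -/

import Mathlib

/-- The closed neighborhood `N[S]` of a set `S` of vertices: `S` together with
all vertices adjacent to a vertex of `S`. -/
def closedNbhdSet {V : Type*} (G : SimpleGraph V) (S : Set V) : Set V :=
  S ∪ {v | ∃ u ∈ S, G.Adj u v}

/-- The monitored sets `P^i(S)` for power domination:
`P^0(S) = N[S]` and
`P^{i+1}(S) = P^i(S) ∪ { w : {w} = N[v] \ P^i(S) for some v ∈ P^i(S) }`. -/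
def monitored {V : Type*} (G : SimpleGraph V) (S : Set V) : ℕ → Set V
  | 0 => closedNbhdSet G S
  | i + 1 => monitored G S i ∪
      {w | ∃ v ∈ monitored G S i,
        (insert v (G.neighborSet v)) \ monitored G S i = {w}}

/-- The zero-forcing sets `Q^i(S)`:
`Q^0(S) = S` and
`Q^{i+1}(S) = Q^i(S) ∪ { w : {w} = N[v] \ Q^i(S) for some v ∈ Q^i(S) }`. -/
def forced {V : Type*} (G : SimpleGraph V) (S : Set V) : ℕ → Set V
  | 0 => S
  | i + 1 => forced G S i ∪
      {w | ∃ v ∈ forced G S i,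
        (insert v (G.neighborSet v)) \ forced G S i = {w}}

/-- `S` is a power dominating set if the monitored sets eventually cover all vertices. -/
def IsPowerDominatingSet {V : Type*} (G : SimpleGraph V) (S : Set V) : Prop :=
  ∃ i, monitored G S i = Set.univ

/-- `S` is a zero forcing set if the forcing process eventually covers all vertices. -/
def IsZeroForcingSet {V : Type*} (G : SimpleGraph V) (S : Set V) : Prop :=
  ∃ i, forced G S i = Set.univ

/-- The failed power domination number: the maximum cardinality of a set of
vertices that is not a power dominating set. -/
noncomputable def failedPowerDominationNumber {V : Type*} (G : SimpleGraph V) : ℕ :=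
  sSup {k | ∃ S : Set V, ¬ IsPowerDominatingSet G S ∧ S.ncard = k}

/-- The failed zero forcing number: the maximum cardinality of a set of
vertices that is not a zero forcing set. -/
noncomputable def failedZeroForcingNumber {V : Type*} (G : SimpleGraph V) : ℕ :=
  sSup {k | ∃ S : Set V, ¬ IsZeroForcingSet G S ∧ S.ncard = k}

namespace FPD
variable {V : Type*} {G : SimpleGraph V}

def Stalled (G : SimpleGraph V) (M : Set V) : Prop :=
  ∀ v ∈ M, ∀ w, (insert v (G.neighborSet v)) \ M ≠ {w}

lemma monitored_subset {S M : Set V} (h1 : closedNbhdSet G S ⊆ M) (h2 : Stalled G M) :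
    ∀ i, monitored G S i ⊆ M := by
  intro i
  induction i with
  | zero => exact h1
  | succ n ih =>
    rintro w (hw | ⟨v, hv, hset⟩)
    · exact ih hw
    · by_contra hwM
      apply h2 v (ih hv) w
      apply Set.eq_singleton_iff_unique_mem.2
      have hwmem : w ∈ insert v (G.neighborSet v) \ monitored G S n := by
        rw [hset]; rfl
      refine ⟨⟨hwmem.1, hwM⟩, ?_⟩
      intro x hx
      have : x ∈ insert v (G.neighborSet v) \ monitored G S n :=
        ⟨hx.1, fun h => hx.2 (ih h)⟩
      rw [hset] at this
      exact this

lemma not_pds {S M : Set V} (h1 : closedNbhdSet G S ⊆ M) (h2 : Stalled G M)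
    (h3 : M ≠ Set.univ) : ¬ IsPowerDominatingSet G S := by
  rintro ⟨i, hi⟩
  exact h3 (Set.univ_subset_iff.1 (hi ▸ monitored_subset h1 h2 i))

lemma monitored_mono {S : Set V} : ∀ i, monitored G S i ⊆ monitored G S (i + 1) :=
  fun _ => Set.subset_union_left

lemma monitored_mono' {S : Set V} {i j : ℕ} (h : i ≤ j) :
    monitored G S i ⊆ monitored G S j := by
  induction j with
  | zero => simp_all
  | succ n ih =>
    rcases Nat.lt_or_ge i (n+1) with h' | h'
    · exact (ih (by omega)).trans (monitored_mono n)
    · have : i = n + 1 := by omega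
      subst this; rfl

lemma exists_stalled [Finite V] {S : Set V} (h : ¬ IsPowerDominatingSet G S) :
    ∃ M : Set V, closedNbhdSet G S ⊆ M ∧ Stalled G M ∧ M ≠ Set.univ := by
  by_cases hstab : ∃ i, monitored G S (i + 1) = monitored G S i
  · obtain ⟨i, hi⟩ := hstab
    refine ⟨monitored G S i, monitored_mono' (Nat.zero_le i), ?_, ?_⟩
    · intro v hv w hw
      have hwmem : w ∈ insert v (G.neighborSet v) \ monitored G S i := by rw [hw]; rfl
      have : w ∈ monitored G S (i + 1) := Or.inr ⟨v, hv, hw⟩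
      rw [hi] at this
      exact hwmem.2 this
    · exact fun he => h ⟨i, he⟩
  · exfalso
    push_neg at hstab
    have hstrict : StrictMono (fun i => (monitored G S i).ncard) := by
      apply strictMono_nat_of_lt_succ
      intro n
      apply Set.ncard_lt_ncard
      · exact ⟨monitored_mono n, fun hsub => hstab n (le_antisymm hsub (monitored_mono n))⟩
      · exact Set.toFinite _
    have h1 : Nat.card V + 1 ≤ (monitored G S (Nat.card V + 1)).ncard :=
      hstrict.le_apply
    have h2 : (monitored G S (Nat.card V + 1)).ncard ≤ Nat.card V := by
      rw [← Set.ncard_univ]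
      exact Set.ncard_le_ncard (Set.subset_univ _) (Set.toFinite _)
    omega

lemma diff_ne_singleton_of_all {M : Set V} {v : V} (hv : v ∈ M)
    (h : ∀ y, G.Adj v y → y ∈ M) (w : V) :
    insert v (G.neighborSet v) \ M ≠ {w} := by
  intro he
  have hw : w ∈ insert v (G.neighborSet v) \ M := by rw [he]; rfl
  rcases hw.1 with rfl | h'
  · exact hw.2 hv
  · exact hw.2 (h w h')

lemma diff_ne_singleton_of_two {M : Set V} {v x y : V} (hx : G.Adj v x) (hy : G.Adj v y)
    (hxM : x ∉ M) (hyM : y ∉ M) (hxy : x ≠ y) (w : V) :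
    insert v (G.neighborSet v) \ M ≠ {w} := by
  intro he
  have h1 : x ∈ ({w} : Set V) := he ▸ ⟨Set.mem_insert_of_mem _ hx, hxM⟩
  have h2 : y ∈ ({w} : Set V) := he ▸ ⟨Set.mem_insert_of_mem _ hy, hyM⟩
  exact hxy (h1.trans h2.symm)

lemma force {M : Set V} (hM : Stalled G M) {v x : V} (hv : v ∈ M) (hx : x ∉ M)
    (hadj : G.Adj v x) (huniq : ∀ y, G.Adj v y → y ∉ M → y = x) : False := by
  apply hM v hv x
  apply Set.eq_singleton_iff_unique_mem.2
  refine ⟨⟨Set.mem_insert_of_mem _ hadj, hx⟩, ?_⟩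
  rintro y ⟨hy1, hy2⟩
  rcases hy1 with rfl | hy1
  · exact absurd hv hy2
  · exact huniq y hy1 hy2

lemma ladder_adj {k : ℕ} (a b : Fin k × Fin 2) :
    (SimpleGraph.pathGraph k □ SimpleGraph.pathGraph 2).Adj a b ↔
      ((((a.1 : ℕ) + 1 = b.1) ∨ ((b.1 : ℕ) + 1 = a.1)) ∧ a.2 = b.2) ∨
        ((a.1 : ℕ) = b.1 ∧ a.2 ≠ b.2) := by
  rw [SimpleGraph.boxProd_adj, SimpleGraph.pathGraph_adj, SimpleGraph.pathGraph_adj]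
  have h1 : a.1 = b.1 ↔ (a.1 : ℕ) = (b.1 : ℕ) := by rw [Fin.val_inj]
  have h2 : a.2 = b.2 ↔ (a.2 : ℕ) = (b.2 : ℕ) := by rw [Fin.val_inj]
  have ha2 := a.2.isLt
  have hb2 := b.2.isLt
  constructor
  · rintro (⟨h, h'⟩ | ⟨h, h'⟩)
    · exact Or.inl ⟨h, h'⟩
    · refine Or.inr ⟨h1.1 h', fun he => ?_⟩
      rw [h2] at he; omega
  · rintro (⟨h, h'⟩ | ⟨h, h'⟩)
    · exact Or.inl ⟨h, h'⟩
    · refine Or.inr ⟨?_, h1.2 h⟩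
      rw [ne_eq, h2] at h'; omega

end FPD

namespace FPD

section Ladder
variable {k : ℕ} {M : Set (Fin k × Fin 2)}

/-- membership of the vertex in column `c`, row `r` (column given as a natural). -/
def Q (M : Set (Fin k × Fin 2)) (c : ℕ) (r : Fin 2) : Prop :=
  ∃ h : c < k, ((⟨c, h⟩ : Fin k), r) ∈ M

lemma other_eq : ∀ a b c : Fin 2, b ≠ a → c ≠ a → b = c := by decide

lemma row_cases : ∀ r ρ ρ' : Fin 2, ρ' ≠ ρ → r = ρ ∨ r = ρ' := by decide

lemma vpair_eq {y x : Fin k × Fin 2} (h1 : (y.1 : ℕ) = (x.1 : ℕ)) (h2 : y.2 = x.2) :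
    y = x := by
  obtain ⟨a, b⟩ := y; obtain ⟨c, d⟩ := x
  simp only [Prod.mk.injEq]
  exact ⟨Fin.val_inj.1 h1, h2⟩

lemma mem_of {c : ℕ} {r : Fin 2} (h : Q M c r) {y : Fin k × Fin 2}
    (h1 : (y.1 : ℕ) = c) (h2 : y.2 = r) : y ∈ M := by
  obtain ⟨hck, hm⟩ := h
  have : y = ((⟨c, hck⟩ : Fin k), r) := vpair_eq h1 h2
  rw [this]; exact hm

lemma Q_lt {c : ℕ} {r : Fin 2} (h : Q M c r) : c < k := h.1

/-- Column `c` is fully monitored. -/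
def FullC (M : Set (Fin k × Fin 2)) (c : ℕ) : Prop := ∀ r : Fin 2, Q M c r

lemma full_of {c : ℕ} {ρ ρ' : Fin 2} (h1 : Q M c ρ) (h2 : Q M c ρ') (hne : ρ' ≠ ρ) :
    FullC M c := by
  intro r
  rcases row_cases r ρ ρ' hne with rfl | rfl
  · exact h1
  · exact h2

lemma mem_of_full {c : ℕ} (h : FullC M c) {y : Fin k × Fin 2} (h1 : (y.1 : ℕ) = c) :
    y ∈ M := mem_of (h y.2) h1 rfl

/-- If the only possibly-unmonitored closed neighbor of `(c,ρ) ∈ M` is the vertical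
neighbor `(c,ρ')`, then `(c,ρ')` is monitored (else it would be forced). -/
lemma force_vert (hst : Stalled (SimpleGraph.pathGraph k □ SimpleGraph.pathGraph 2) M)
    {c : ℕ} (hck : c < k) {ρ ρ' : Fin 2} (hrr : ρ' ≠ ρ)
    (hv : ((⟨c, hck⟩ : Fin k), ρ) ∈ M)
    (hL : c = 0 ∨ Q M (c - 1) ρ) (hR : c + 1 = k ∨ Q M (c + 1) ρ)
    (hV : ¬ Q M c ρ') : False := by
  apply force hst (v := ((⟨c, hck⟩ : Fin k), ρ)) (x := ((⟨c, hck⟩ : Fin k), ρ')) hv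
    (fun hm => hV ⟨hck, hm⟩) ((ladder_adj _ _).2 (Or.inr ⟨rfl, Ne.symm hrr⟩))
  intro y hadj hyM
  rw [ladder_adj] at hadj
  dsimp only at hadj
  rcases hadj with ⟨hcol, hrow⟩ | ⟨hcol, hrow⟩
  · exfalso
    rcases hcol with hcol | hcol
    · rcases hR with hR | hR
      · have := y.1.isLt; omega
      · exact hyM (mem_of hR (by omega) hrow.symm)
    · rcases hL with hL | hL
      · omega
      · exact hyM (mem_of hL (by omega) hrow.symm)
  · exact vpair_eq (by dsimp only; omega) (other_eq ρ y.2 ρ' (Ne.symm hrow) hrr)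

/-- Forcing to the right. -/
lemma force_right (hst : Stalled (SimpleGraph.pathGraph k □ SimpleGraph.pathGraph 2) M)
    {c : ℕ} (hck1 : c + 1 < k) {ρ ρ' : Fin 2} (hrr : ρ' ≠ ρ)
    (hv : ((⟨c, by omega⟩ : Fin k), ρ) ∈ M)
    (hL : c = 0 ∨ Q M (c - 1) ρ) (hV : Q M c ρ')
    (hR : ¬ Q M (c + 1) ρ) : False := by
  apply force hst (v := ((⟨c, by omega⟩ : Fin k), ρ)) (x := ((⟨c + 1, hck1⟩ : Fin k), ρ)) hv
    (fun hm => hR ⟨hck1, hm⟩) ((ladder_adj _ _).2 (Or.inl ⟨Or.inl rfl, rfl⟩))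
  intro y hadj hyM
  rw [ladder_adj] at hadj
  dsimp only at hadj
  rcases hadj with ⟨hcol, hrow⟩ | ⟨hcol, hrow⟩
  · rcases hcol with hcol | hcol
    · exact vpair_eq (by dsimp only; omega) hrow.symm
    · exfalso
      rcases hL with hL | hL
      · omega
      · exact hyM (mem_of hL (by omega) hrow.symm)
  · exfalso
    exact hyM (mem_of hV (by omega)
      (other_eq ρ y.2 ρ' (Ne.symm hrow) hrr))

/-- Forcing to the left. -/
lemma force_left (hst : Stalled (SimpleGraph.pathGraph k □ SimpleGraph.pathGraph 2) M)
    {c : ℕ} (hck : c < k) (hc0 : 0 < c) {ρ ρ' : Fin 2} (hrr : ρ' ≠ ρ)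
    (hv : ((⟨c, hck⟩ : Fin k), ρ) ∈ M)
    (hR : c + 1 = k ∨ Q M (c + 1) ρ) (hV : Q M c ρ')
    (hL : ¬ Q M (c - 1) ρ) : False := by
  apply force hst (v := ((⟨c, hck⟩ : Fin k), ρ))
    (x := ((⟨c - 1, by omega⟩ : Fin k), ρ)) hv
    (fun hm => hL ⟨by omega, hm⟩) ((ladder_adj _ _).2 (Or.inl ⟨Or.inr (by simp; omega), rfl⟩))
  intro y hadj hyM
  rw [ladder_adj] at hadj
  dsimp only at hadj
  rcases hadj with ⟨hcol, hrow⟩ | ⟨hcol, hrow⟩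
  · rcases hcol with hcol | hcol
    · exfalso
      rcases hR with hR | hR
      · have := y.1.isLt; omega
      · exact hyM (mem_of hR (by omega) hrow.symm)
    · exact vpair_eq (by dsimp only; omega) hrow.symm
  · exfalso
    exact hyM (mem_of hV (by omega)
      (other_eq ρ y.2 ρ' (Ne.symm hrow) hrr))

end Ladder
end FPD

namespace FPD
section Ladder2
variable {k : ℕ} {M : Set (Fin k × Fin 2)}

lemma one_sub_ne : ∀ r : Fin 2, 1 - r ≠ r := by decide

lemma stepR (hst : Stalled (SimpleGraph.pathGraph k □ SimpleGraph.pathGraph 2) M)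
    {j : ℕ} (h1 : FullC M j) (h2 : FullC M (j + 1)) (hj : j + 2 < k) :
    FullC M (j + 2) := by
  intro r
  by_contra hq
  exact force_right hst (c := j + 1) hj (one_sub_ne r)
    (mem_of (h2 r) rfl rfl)
    (Or.inr (by simp only [Nat.add_sub_cancel]; exact h1 r))
    (h2 (1 - r)) hq

lemma stepL (hst : Stalled (SimpleGraph.pathGraph k □ SimpleGraph.pathGraph 2) M)
    {j : ℕ} (h1 : FullC M (j + 1)) (h2 : FullC M (j + 2)) : FullC M j := by
  intro r
  have hk1 : j + 1 < k := Q_lt (h1 0)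
  by_contra hq
  exact force_left hst (c := j + 1) hk1 (by omega) (one_sub_ne r)
    (mem_of (h1 r) rfl rfl)
    (Or.inr (h2 r)) (h1 (1 - r))
    (by simp only [Nat.add_sub_cancel]; exact hq)

lemma no_two_full (hst : Stalled (SimpleGraph.pathGraph k □ SimpleGraph.pathGraph 2) M)
    (hne : M ≠ Set.univ) {j : ℕ} (h1 : FullC M j) (h2 : FullC M (j + 1)) : False := by
  have up : ∀ t, (j + t < k → FullC M (j + t)) ∧ (j + t + 1 < k → FullC M (j + t + 1)) := by
    intro t
    induction t with
    | zero => exact ⟨fun _ => h1, fun _ => h2⟩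
    | succ n ih =>
      constructor
      · intro h
        have e : j + (n + 1) = j + n + 1 := by omega
        rw [e] at h ⊢
        exact ih.2 h
      · intro h
        have e : j + (n + 1) + 1 = (j + n) + 2 := by omega
        rw [e] at h ⊢
        exact stepR hst (ih.1 (by omega)) (ih.2 (by omega)) h
  have down : ∀ t, t ≤ j → FullC M (j - t) ∧ FullC M (j - t + 1) := by
    intro t
    induction t with
    | zero => intro _; simpa using ⟨h1, h2⟩
    | succ n ih =>
      intro h
      obtain ⟨f1, f2⟩ := ih (by omega)
      have e1 : j - n = (j - (n + 1)) + 1 := by omega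
      have e2 : j - n + 1 = (j - (n + 1)) + 2 := by omega
      rw [e1] at f1
      rw [e2] at f2
      exact ⟨stepL hst f1 f2, f1⟩
  apply hne
  apply Set.eq_univ_of_forall
  intro v
  rcases le_or_gt j (v.1 : ℕ) with h | h
  · have hf := (up ((v.1 : ℕ) - j)).1
    have e : j + ((v.1 : ℕ) - j) = (v.1 : ℕ) := by omega
    rw [e] at hf
    exact mem_of_full (hf v.1.isLt) rfl
  · have hf := (down (j - (v.1 : ℕ)) (by omega)).1
    have e : j - (j - (v.1 : ℕ)) = (v.1 : ℕ) := by omega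
    rw [e] at hf
    exact mem_of_full hf rfl

lemma elem_struct (hk : 4 ≤ k)
    (hst : Stalled (SimpleGraph.pathGraph k □ SimpleGraph.pathGraph 2) M)
    (hne : M ≠ Set.univ) {S : Set (Fin k × Fin 2)}
    (hNS : closedNbhdSet (SimpleGraph.pathGraph k □ SimpleGraph.pathGraph 2) S ⊆ M)
    {c : ℕ} {hck : c < k} {r : Fin 2} (hs : ((⟨c, hck⟩ : Fin k), r) ∈ S) :
    2 ≤ c ∧ c + 3 ≤ k ∧ Q M c r ∧ Q M c (1 - r) ∧ Q M (c + 1) r ∧ Q M (c - 1) r ∧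
      ¬ Q M (c + 1) (1 - r) ∧ ¬ Q M (c - 1) (1 - r) := by
  have sInM : ((⟨c, hck⟩ : Fin k), r) ∈ M := hNS (Or.inl hs)
  have nbrM : ∀ y, (SimpleGraph.pathGraph k □ SimpleGraph.pathGraph 2).Adj
      ((⟨c, hck⟩ : Fin k), r) y → y ∈ M :=
    fun y h => hNS (Or.inr ⟨_, hs, h⟩)
  have B1 : Q M c r := ⟨hck, sInM⟩
  have B2 : Q M c (1 - r) :=
    ⟨hck, nbrM ((⟨c, hck⟩ : Fin k), 1 - r)
      ((ladder_adj _ _).2 (Or.inr ⟨rfl, Ne.symm (one_sub_ne r)⟩))⟩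
  have B3 : ∀ _ : c + 1 < k, Q M (c + 1) r := fun h =>
    ⟨h, nbrM ((⟨c + 1, h⟩ : Fin k), r) ((ladder_adj _ _).2 (Or.inl ⟨Or.inl rfl, rfl⟩))⟩
  have B4 : 0 < c → Q M (c - 1) r := fun h =>
    ⟨by omega, nbrM ((⟨c - 1, by omega⟩ : Fin k), r)
      ((ladder_adj _ _).2 (Or.inl ⟨Or.inr (by dsimp only; omega), rfl⟩))⟩
  -- c ≥ 1
  have hc1 : 1 ≤ c := by
    by_contra h0
    have hc : c = 0 := by omega
    subst hc
    have q1r : Q M 1 r := B3 (by omega)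
    have q1r' : Q M 1 (1 - r) := by
      by_contra hq
      exact force_right hst (c := 0) (by omega) (Ne.symm (one_sub_ne r))
        (mem_of B2 rfl rfl) (Or.inl rfl) B1 hq
    exact no_two_full hst hne (j := 0) (full_of B1 B2 (one_sub_ne r))
      (full_of q1r q1r' (one_sub_ne r))
  -- c ≤ k - 2
  have hc2 : c + 2 ≤ k := by
    by_contra h0
    have hq' : Q M (c - 1) (1 - r) := by
      by_contra hq
      exact force_left hst hck (by omega) (Ne.symm (one_sub_ne r))
        (mem_of B2 rfl rfl) (Or.inl (by omega)) B1 hq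
    have hfull1 : FullC M (c - 1) := full_of (B4 (by omega)) hq' (one_sub_ne r)
    have hfull2 : FullC M c := full_of B1 B2 (one_sub_ne r)
    refine no_two_full hst hne (j := c - 1) hfull1 ?_
    have e : c - 1 + 1 = c := by omega
    rw [e]
    exact hfull2
  have hQc1r : Q M (c + 1) r := B3 (by omega)
  have hQcm1r : Q M (c - 1) r := B4 (by omega)
  -- sides out
  have sideR : ¬ Q M (c + 1) (1 - r) := fun hA =>
    no_two_full hst hne (full_of B1 B2 (one_sub_ne r)) (full_of hQc1r hA (one_sub_ne r))
  have sideL : ¬ Q M (c - 1) (1 - r) := by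
    intro hB
    refine no_two_full hst hne (j := c - 1)
      (full_of hQcm1r hB (one_sub_ne r)) ?_
    have e : c - 1 + 1 = c := by omega
    rw [e]
    exact full_of B1 B2 (one_sub_ne r)
  -- c ≥ 2
  have hc1' : 2 ≤ c := by
    by_contra h0
    have hc : c = 1 := by omega
    subst hc
    exact force_vert hst (c := 0) (by omega) (one_sub_ne r)
      (mem_of hQcm1r (by norm_num) rfl) (Or.inl rfl) (Or.inr B1)
      (by simpa using sideL)
  -- c ≤ k - 3
  have hc2' : c + 3 ≤ k := by
    by_contra h0
    have hck1 : c + 1 < k := by omega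
    refine force_vert hst (c := c + 1) hck1 (one_sub_ne r)
      (mem_of hQc1r rfl rfl) ?_ (Or.inl (by omega)) sideR
    refine Or.inr ?_
    simp only [Nat.add_sub_cancel]
    exact B1
  exact ⟨hc1', hc2', B1, B2, hQc1r, hQcm1r, sideR, sideL⟩

end Ladder2
end FPD

namespace FPD
section Ladder3
variable {k : ℕ} {M : Set (Fin k × Fin 2)}

lemma elem_struct' (hk : 4 ≤ k)
    (hst : Stalled (SimpleGraph.pathGraph k □ SimpleGraph.pathGraph 2) M)
    (hne : M ≠ Set.univ) {S : Set (Fin k × Fin 2)}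
    (hNS : closedNbhdSet (SimpleGraph.pathGraph k □ SimpleGraph.pathGraph 2) S ⊆ M)
    {s : Fin k × Fin 2} (hs : s ∈ S) :
    2 ≤ (s.1 : ℕ) ∧ (s.1 : ℕ) + 3 ≤ k ∧ Q M (s.1 : ℕ) s.2 ∧ Q M (s.1 : ℕ) (1 - s.2) ∧
      Q M ((s.1 : ℕ) + 1) s.2 ∧ Q M ((s.1 : ℕ) - 1) s.2 ∧
      ¬ Q M ((s.1 : ℕ) + 1) (1 - s.2) ∧ ¬ Q M ((s.1 : ℕ) - 1) (1 - s.2) :=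
  elem_struct hk hst hne hNS (c := (s.1 : ℕ)) (hck := s.1.isLt) (r := s.2) hs

lemma failed_card_le {k : ℕ} (hk : 4 ≤ k) {S : Set (Fin k × Fin 2)}
    (hS : ¬ IsPowerDominatingSet (SimpleGraph.pathGraph k □ SimpleGraph.pathGraph 2) S) :
    S.ncard ≤ (k - 2) / 3 := by
  obtain ⟨M, hNS, hst, hne⟩ := exists_stalled hS
  -- basic structure of every element
  have P := fun {s} (hs : s ∈ S) => elem_struct' hk hst hne hNS hs
  -- injectivity of the column map on S
  have hinj : ∀ s ∈ S, ∀ s' ∈ S, (s.1 : ℕ) = (s'.1 : ℕ) → s = s' := by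
    intro s hs s' hs' hcc
    have Ps := P hs
    have Ps' := P hs'
    have hrow : s.2 = s'.2 := by
      by_contra hrr
      have h1 : s'.2 = 1 - s.2 := other_eq s.2 s'.2 (1 - s.2) (Ne.symm hrr) (one_sub_ne s.2)
      have h5 : Q M ((s'.1 : ℕ) + 1) s'.2 := Ps'.2.2.2.2.1
      rw [h1, ← hcc] at h5
      exact Ps.2.2.2.2.2.2.1 h5
    exact vpair_eq hcc hrow
  -- spacing
  have hspace : ∀ s ∈ S, ∀ s' ∈ S, (s.1 : ℕ) < (s'.1 : ℕ) → (s.1 : ℕ) + 3 ≤ (s'.1 : ℕ) := by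
    intro s hs s' hs' hlt
    have Ps := P hs
    have Ps' := P hs'
    set c := (s.1 : ℕ) with hc
    set c' := (s'.1 : ℕ) with hc'
    have hne1 : c' ≠ c + 1 := by
      intro he
      refine no_two_full hst hne (j := c)
        (full_of Ps.2.2.1 Ps.2.2.2.1 (one_sub_ne s.2)) ?_
      rw [← he]
      exact full_of Ps'.2.2.1 Ps'.2.2.2.1 (one_sub_ne s'.2)
    have hne2 : c' ≠ c + 2 := by
      intro he
      have hrow : s'.2 = s.2 := by
        by_contra hrr
        have h1 : s'.2 = 1 - s.2 := other_eq s.2 s'.2 (1 - s.2) hrr (one_sub_ne s.2)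
        have h2 : Q M (c' - 1) s'.2 := Ps'.2.2.2.2.2.1
        rw [h1, he] at h2
        have e2 : c + 2 - 1 = c + 1 := by omega
        rw [e2] at h2
        exact Ps.2.2.2.2.2.2.1 h2
      have hck1 : c + 1 < k := Q_lt Ps.2.2.2.2.1
      refine force_vert hst (c := c + 1) hck1 (one_sub_ne s.2)
        (mem_of Ps.2.2.2.2.1 rfl rfl) ?_ ?_ Ps.2.2.2.2.2.2.1
      · refine Or.inr ?_
        simp only [Nat.add_sub_cancel]
        exact Ps.2.2.1
      · refine Or.inr ?_
        have h3 : Q M c' s'.2 := Ps'.2.2.1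
        rw [he, hrow] at h3
        exact h3
    omega
  -- cardinality bound
  rcases S.eq_empty_or_nonempty with rfl | ⟨s0, hs0⟩
  · simp
  · have hf : Set.InjOn (fun v : Fin k × Fin 2 => ((v.1 : ℕ) - 2) / 3) S := by
      intro a ha b hb hfe
      have hfe' : ((a.1 : ℕ) - 2) / 3 = ((b.1 : ℕ) - 2) / 3 := hfe
      rcases lt_trichotomy (a.1 : ℕ) (b.1 : ℕ) with h | h | h
      · have h1 := hspace a ha b hb h
        have h2 := (P ha).1
        exfalso; omega
      · exact hinj a ha b hb h
      · have h1 := hspace b hb a ha h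
        have h2 := (P hb).1
        exfalso; omega
    have himg : (fun v : Fin k × Fin 2 => ((v.1 : ℕ) - 2) / 3) '' S ⊆
        Set.Iio ((k - 2) / 3) := by
      rintro _ ⟨a, ha, rfl⟩
      have h1 := (P ha).1
      have h2 := (P ha).2.1
      simp only [Set.mem_Iio]
      omega
    calc S.ncard = ((fun v : Fin k × Fin 2 => ((v.1 : ℕ) - 2) / 3) '' S).ncard :=
          (Set.ncard_image_of_injOn hf).symm
      _ ≤ (Set.Iio ((k - 2) / 3)).ncard :=
          Set.ncard_le_ncard himg (Set.finite_Iio _)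
      _ = (k - 2) / 3 := by simp [Set.ncard_eq_toFinset_card']

end Ladder3
end FPD

namespace FPD
section Lower

def par (i : ℕ) : Fin 2 := if i % 2 = 0 then 0 else 1

lemma par_succ (i : ℕ) : par (i + 1) ≠ par i := by
  rcases Nat.mod_two_eq_zero_or_one i with h | h <;>
    simp [par, Nat.add_mod, h]

/-- The stalled set for the lower-bound construction. -/
def lowM (k m : ℕ) : Set (Fin k × Fin 2) :=
  {v | 1 ≤ (v.1 : ℕ) ∧ (v.1 : ℕ) ≤ 3 * m ∧
    ((v.1 : ℕ) % 3 = 2 ∨ v.2 = par (((v.1 : ℕ) - 1) / 3))}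

/-- The failed power dominating set for the lower-bound construction. -/
def lowS (k m : ℕ) : Set (Fin k × Fin 2) :=
  {v | ∃ i < m, (v.1 : ℕ) = 3 * i + 2 ∧ v.2 = par i}

variable {k m : ℕ}

lemma lowS_closed_subset (h3m : 3 * m + 2 ≤ k) :
    closedNbhdSet (SimpleGraph.pathGraph k □ SimpleGraph.pathGraph 2) (lowS k m)
      ⊆ lowM k m := by
  rintro v (hv | ⟨u, hu, hadj⟩)
  · obtain ⟨i, him, h1, h2⟩ := hv
    refine ⟨by omega, by omega, Or.inl (by omega)⟩
  · obtain ⟨i, him, h1, h2⟩ := hu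
    rw [ladder_adj] at hadj
    rcases hadj with ⟨hcol, hrow⟩ | ⟨hcol, hrow⟩
    · rcases hcol with hcol | hcol
      · -- v is to the right of u : column 3i+3
        refine ⟨by omega, by omega, Or.inr ?_⟩
        have e : ((v.1 : ℕ) - 1) / 3 = i := by omega
        rw [e, ← hrow, h2]
      · -- v is to the left of u : column 3i+1
        refine ⟨by omega, by omega, Or.inr ?_⟩
        have e : ((v.1 : ℕ) - 1) / 3 = i := by omega
        rw [e, ← hrow, h2]
    · exact ⟨by omega, by omega, Or.inl (by omega)⟩

lemma lowM_stalled (h3m : 3 * m + 2 ≤ k) :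
    Stalled (SimpleGraph.pathGraph k □ SimpleGraph.pathGraph 2) (lowM k m) := by
  intro v hv w
  obtain ⟨h1, h2, h3⟩ := hv
  by_cases hmod : (v.1 : ℕ) % 3 = 2
  · obtain ⟨i, hi⟩ : ∃ i, (v.1 : ℕ) = 3 * i + 2 := ⟨(v.1 : ℕ) / 3, by omega⟩
    have him : i < m := by omega
    by_cases hr : v.2 = par i
    · -- interior vertex of a block: all neighbors monitored
      have hvM : v ∈ lowM k m := ⟨h1, h2, h3⟩
      apply diff_ne_singleton_of_all hvM
      intro y hadj
      rw [ladder_adj] at hadj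
      rcases hadj with ⟨hcol, hrow⟩ | ⟨hcol, hrow⟩
      · refine ⟨by omega, by omega, Or.inr ?_⟩
        have e : ((y.1 : ℕ) - 1) / 3 = i := by omega
        rw [e, ← hrow, hr]
      · exact ⟨by omega, by omega, Or.inl (by omega)⟩
    · -- the lone vertex on the other row: two horizontal neighbors unmonitored
      have hx1 : (v.1 : ℕ) - 1 < k := by omega
      have hx2 : (v.1 : ℕ) + 1 < k := by omega
      apply diff_ne_singleton_of_two
        (x := ((⟨(v.1 : ℕ) - 1, hx1⟩ : Fin k), v.2))
        (y := ((⟨(v.1 : ℕ) + 1, hx2⟩ : Fin k), v.2))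
      · exact (ladder_adj _ _).2 (Or.inl ⟨Or.inr (by dsimp only; omega), rfl⟩)
      · exact (ladder_adj _ _).2 (Or.inl ⟨Or.inl (by dsimp only), rfl⟩)
      · rintro ⟨g1, g2, g3 | g3⟩
        · dsimp only at g1 g2 g3; omega
        · dsimp only at g1 g2 g3
          apply hr
          rw [g3]
          congr 1
          omega
      · rintro ⟨g1, g2, g3 | g3⟩
        · dsimp only at g1 g2 g3; omega
        · dsimp only at g1 g2 g3
          apply hr
          rw [g3]
          congr 1
          omega
      · intro he
        have := congrArg (fun p => ((p.1 : ℕ)) : Fin k × Fin 2 → ℕ) he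
        dsimp only at this
        omega
  · have hrow : v.2 = par (((v.1 : ℕ) - 1) / 3) := h3.resolve_left hmod
    by_cases hm1 : (v.1 : ℕ) % 3 = 1
    · obtain ⟨i, hi⟩ : ∃ i, (v.1 : ℕ) = 3 * i + 1 := ⟨(v.1 : ℕ) / 3, by omega⟩
      have hediv : ((v.1 : ℕ) - 1) / 3 = i := by omega
      rw [hediv] at hrow
      have hx1 : (v.1 : ℕ) - 1 < k := by omega
      apply diff_ne_singleton_of_two
        (x := (v.1, 1 - v.2))
        (y := ((⟨(v.1 : ℕ) - 1, hx1⟩ : Fin k), v.2))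
      · exact (ladder_adj _ _).2 (Or.inr ⟨rfl, Ne.symm (one_sub_ne v.2)⟩)
      · exact (ladder_adj _ _).2 (Or.inl ⟨Or.inr (by dsimp only; omega), rfl⟩)
      · rintro ⟨g1, g2, g3 | g3⟩
        · dsimp only at g1 g2 g3; omega
        · dsimp only at g1 g2 g3
          have e2 : ((v.1 : ℕ) - 1) / 3 = i := hediv
          rw [e2] at g3
          exact one_sub_ne v.2 (by rw [g3, ← hrow])
      · rintro ⟨g1, g2, g3 | g3⟩
        · dsimp only at g1 g2 g3; omega
        · dsimp only at g1 g2 g3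
          -- column 3i, i ≥ 1; row needed is par (i-1)
          have hi1 : 1 ≤ i := by omega
          have e2 : ((v.1 : ℕ) - 1 - 1) / 3 = i - 1 := by omega
          rw [e2] at g3
          have : par (i - 1 + 1) = par (i - 1) := by
            rw [← g3, hrow]
            congr 1
            omega
          exact par_succ (i - 1) this
      · intro he
        have := congrArg (fun p => ((p.1 : ℕ)) : Fin k × Fin 2 → ℕ) he
        dsimp only at this
        omega
    · -- (v.1) % 3 = 0
      have hm0 : (v.1 : ℕ) % 3 = 0 := by omega
      obtain ⟨i, hi⟩ : ∃ i, (v.1 : ℕ) = 3 * i + 3 := ⟨(v.1 : ℕ) / 3 - 1, by omega⟩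
      have hediv : ((v.1 : ℕ) - 1) / 3 = i := by omega
      rw [hediv] at hrow
      have hx2 : (v.1 : ℕ) + 1 < k := by omega
      apply diff_ne_singleton_of_two
        (x := (v.1, 1 - v.2))
        (y := ((⟨(v.1 : ℕ) + 1, hx2⟩ : Fin k), v.2))
      · exact (ladder_adj _ _).2 (Or.inr ⟨rfl, Ne.symm (one_sub_ne v.2)⟩)
      · exact (ladder_adj _ _).2 (Or.inl ⟨Or.inl (by dsimp only), rfl⟩)
      · rintro ⟨g1, g2, g3 | g3⟩
        · dsimp only at g1 g2 g3; omega
        · dsimp only at g1 g2 g3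
          rw [hediv] at g3
          exact one_sub_ne v.2 (by rw [g3, ← hrow])
      · rintro ⟨g1, g2, g3 | g3⟩
        · dsimp only at g1 g2 g3; omega
        · dsimp only at g1 g2 g3
          have e2 : ((v.1 : ℕ) + 1 - 1) / 3 = i + 1 := by omega
          rw [e2] at g3
          exact par_succ i (by rw [← g3, hrow])
      · intro he
        have := congrArg (fun p => ((p.1 : ℕ)) : Fin k × Fin 2 → ℕ) he
        dsimp only at this
        omega

lemma lowM_ne_univ (hk : 1 ≤ k) : lowM k m ≠ Set.univ := by
  intro h
  have := Set.eq_univ_iff_forall.1 h ((⟨0, by omega⟩ : Fin k), 0)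
  exact absurd this.1 (by norm_num)

lemma lowS_ncard (h3m : 3 * m + 2 ≤ k) : (lowS k m).ncard = m := by
  have hk0 : 0 < k := by omega
  set f : ℕ → Fin k × Fin 2 :=
    fun i => ((⟨(3 * i + 2) % k, Nat.mod_lt _ hk0⟩ : Fin k), par i) with hf
  have hmod : ∀ i < m, (3 * i + 2) % k = 3 * i + 2 := by
    intro i hi
    exact Nat.mod_eq_of_lt (by omega)
  have himg : lowS k m = f '' Set.Iio m := by
    ext v
    constructor
    · rintro ⟨i, him, h1, h2⟩
      refine ⟨i, him, ?_⟩
      symm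
      apply vpair_eq
      · simp only [hf]
        rw [hmod i him, h1]
      · exact h2
    · rintro ⟨i, him, rfl⟩
      exact ⟨i, him, by simp only [hf]; rw [hmod i him], rfl⟩
  have hinj : Set.InjOn f (Set.Iio m) := by
    intro a ha b hb he
    have := congrArg (fun p => ((p.1 : ℕ)) : Fin k × Fin 2 → ℕ) he
    simp only [hf] at this
    rw [hmod a ha, hmod b hb] at this
    omega
  rw [himg, Set.ncard_image_of_injOn hinj]
  simp [Set.ncard_eq_toFinset_card']

lemma lower (hk : 4 ≤ k) (h3m : 3 * m + 2 ≤ k) :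
    ∃ S : Set (Fin k × Fin 2),
      ¬ IsPowerDominatingSet (SimpleGraph.pathGraph k □ SimpleGraph.pathGraph 2) S ∧
        S.ncard = m :=
  ⟨lowS k m,
    not_pds (lowS_closed_subset h3m) (lowM_stalled h3m) (lowM_ne_univ (by omega)),
    lowS_ncard h3m⟩

end Lower
end FPD

theorem failedPowerDominationNumber_ladder (k : ℕ) (hk : 4 ≤ k) :
    failedPowerDominationNumber
      (SimpleGraph.pathGraph k □ SimpleGraph.pathGraph 2) = ((k - 4) + 2) / 3 := by
  have hm : (k - 4) + 2 = k - 2 := by omega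
  rw [hm]
  obtain ⟨S, hSf, hScard⟩ := FPD.lower hk (m := (k - 2) / 3) (by omega)
  unfold failedPowerDominationNumber
  apply le_antisymm
  · apply csSup_le
    · exact ⟨(k - 2) / 3, S, hSf, hScard⟩
    · rintro j ⟨T, hTf, rfl⟩
      exact FPD.failed_card_le hk hTf
  · apply le_csSup
    · refine ⟨(k - 2) / 3, ?_⟩
      rintro j ⟨T, hTf, rfl⟩
      exact FPD.failed_card_le hk hTf
    · exact ⟨S, hSf, hScard⟩
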